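/- arXiv:1312.3184 — 4 statements merged into one kernel-verified Lean document; each statement's English description precedes it below -/
import Mathlib

section
/- For every contract C and contract literal c, the language of the literal derivative δ_c(C) is contained in the intersection over all properties p ∈ L(c) of the languages L(δ_p(C)). -/
/-- Contracts: extended regular expressions with intersection.
Literals are modeled as sets of properties. -/
inductive Contract (A : Type*) where
  | emptyset : Contract A
  | eps : Contract A
  | lit : Set A → Contract A
  | star : Contract A → Contract A
  | union : Contract A → Contract A → Contract A
  | inter : Contract A → Contract A → Contract A
  | concat : Contract A → Contract A → Contract A

namespace Contract

variable {A : Type*}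

/-- The language of a contract, a set of access paths (words over `A`). -/
def lang : Contract A → Set (List A)
  | emptyset => ∅
  | eps => {[]}
  | lit s => {w | ∃ p ∈ s, w = [p]}
  | star c => {w | ∃ l : List (List A), (∀ x ∈ l, x ∈ lang c) ∧ w = l.flatten}
  | union c c' => lang c ∪ lang c'
  | inter c c' => lang c ∩ lang c'
  | concat c c' => {w | ∃ u ∈ lang c, ∃ v ∈ lang c', w = u ++ v}

/-- Syntactic nullability predicate ν. -/
def nullable : Contract A → Bool
  | emptyset => false
  | eps => true
  | lit _ => false
  | star _ => true
  | union c c' => nullable c || nullable c'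
  | inter c c' => nullable c && nullable c'
  | concat c c' => nullable c && nullable c'

open Classical in
/-- Brzozowski derivative of a contract by a property. -/
noncomputable def deriv (p : A) : Contract A → Contract A
  | emptyset => emptyset
  | eps => emptyset
  | lit s => if p ∈ s then eps else emptyset
  | star c => concat (deriv p c) (star c)
  | union c c' => union (deriv p c) (deriv p c')
  | inter c c' => inter (deriv p c) (deriv p c')
  | concat c c' =>
      if nullable c then union (concat (deriv p c) c') (deriv p c')
      else concat (deriv p c) c'

/-- Iterated derivative by an access path. -/
noncomputable def derivWord : List A → Contract A → Contract A
  | [], C => C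
  | p :: P, C => derivWord P (deriv p C)

open Classical in
/-- Literal derivative of a contract by a literal (a set of properties). -/
noncomputable def lderiv (c : Set A) : Contract A → Contract A
  | emptyset => emptyset
  | eps => emptyset
  | lit s => if c ⊆ s then eps else emptyset
  | star C => concat (lderiv c C) (star C)
  | union C C' => union (lderiv c C) (lderiv c C')
  | inter C C' => inter (lderiv c C) (lderiv c C')
  | concat C C' =>
      if nullable C then union (concat (lderiv c C) C') (lderiv c C')
      else concat (lderiv c C) C'

/-- First literals of a contract. -/
def firstLits : Contract A → Set (Set A)
  | emptyset => ∅
  | eps => ∅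
  | lit s => {s}
  | star c => firstLits c
  | union c c' => firstLits c ∪ firstLits c'
  | inter c c' => {s | ∃ a ∈ firstLits c, ∃ b ∈ firstLits c', s = a ∩ b}
  | concat c c' => if nullable c then firstLits c ∪ firstLits c' else firstLits c

/-- First properties of non-empty paths in the language of a contract. -/
def nextP (C : Contract A) : Set A := {p | ∃ P, p :: P ∈ lang C}

end Contract

/-- Left quotient of a language by a word. -/
def leftQuotient {A : Type*} (P : List A) (L : Set (List A)) : Set (List A) :=
  {w | P ++ w ∈ L}

/-- The language of the literal derivative is contained in the intersection of the
property derivatives over the literal. -/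
theorem lang_lderiv_subset {A : Type*} (C : Contract A) (c : Set A) :
    (Contract.lang (Contract.lderiv c C) : Set (List A)) ⊆
      ⋂ p ∈ c, (Contract.lang (Contract.deriv p C) : Set (List A)) := by
  have key : ∀ (C : Contract A) (p : A), p ∈ c →
      Contract.lang (Contract.lderiv c C) ⊆ Contract.lang (Contract.deriv p C) := by
    intro C p hp
    induction C with
    | emptyset => simp [Contract.lderiv, Contract.deriv]
    | eps => simp [Contract.lderiv, Contract.deriv]
    | lit s =>
      simp only [Contract.lderiv, Contract.deriv]
      split
      · rename_i h
        rw [if_pos (h hp)]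
      · intro w hw; simp [Contract.lang] at hw
    | star C ih =>
      simp only [Contract.lderiv, Contract.deriv, Contract.lang]
      rintro w ⟨u, hu, v, hv, rfl⟩
      exact ⟨u, ih hu, v, hv, rfl⟩
    | union C C' ih ih' =>
      simp only [Contract.lderiv, Contract.deriv, Contract.lang]
      exact Set.union_subset_union ih ih'
    | inter C C' ih ih' =>
      simp only [Contract.lderiv, Contract.deriv, Contract.lang]
      exact Set.inter_subset_inter ih ih'
    | concat C C' ih ih' =>
      simp only [Contract.lderiv, Contract.deriv]
      split
      · simp only [Contract.lang]
        apply Set.union_subset_union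
        · rintro w ⟨u, hu, v, hv, rfl⟩
          exact ⟨u, ih hu, v, hv, rfl⟩
        · exact ih'
      · simp only [Contract.lang]
        rintro w ⟨u, hu, v, hv, rfl⟩
        exact ⟨u, ih hu, v, hv, rfl⟩
  intro w hw
  simp only [Set.mem_iInter]
  exact fun p hp => key C p hp hw
end

section
/- For every contract C and every literal c ∈ first(C), assuming that for all p, p' ∈ L(c) the derivatives δ_p(C) and δ_{p'}(C) coincide, the language of the literal derivative δ_c(C) equals the intersection over all p ∈ L(c) of L(δ_p(C)). -/
lemma lderiv_eq_deriv_aux {A : Type*} (c : Set A) (p₀ : A) (hp₀ : p₀ ∈ c) :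
    ∀ C : Contract A, (∀ p ∈ c, ∀ p2 ∈ c, Contract.deriv p C = Contract.deriv p2 C) →
    Contract.lderiv c C = Contract.deriv p₀ C := by
  intro C
  induction C with
  | emptyset => intro _; rfl
  | eps => intro _; rfl
  | lit s =>
    intro h
    simp only [Contract.lderiv, Contract.deriv]
    by_cases hcs : c ⊆ s
    · rw [if_pos hcs, if_pos (hcs hp₀)]
    · rw [if_neg hcs]
      obtain ⟨p, hpc, hps⟩ := Set.not_subset.mp hcs
      have h2 := h p hpc p₀ hp₀
      simp only [Contract.deriv] at h2
      rw [if_neg hps] at h2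
      exact h2
  | star C ih =>
    intro h
    have h' : ∀ p ∈ c, ∀ p2 ∈ c, Contract.deriv p C = Contract.deriv p2 C := by
      intro p hp p2 hp2
      have h2 := h p hp p2 hp2
      simp only [Contract.deriv] at h2
      injection h2
    simp only [Contract.lderiv, Contract.deriv, ih h']
  | union C C' ih ih' =>
    intro h
    have h1 : ∀ p ∈ c, ∀ p2 ∈ c, Contract.deriv p C = Contract.deriv p2 C := by
      intro p hp p2 hp2
      have h2 := h p hp p2 hp2
      simp only [Contract.deriv] at h2
      injection h2
    have h2 : ∀ p ∈ c, ∀ p2 ∈ c, Contract.deriv p C' = Contract.deriv p2 C' := by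
      intro p hp p2 hp2
      have h2 := h p hp p2 hp2
      simp only [Contract.deriv] at h2
      injection h2
    simp only [Contract.lderiv, Contract.deriv, ih h1, ih' h2]
  | inter C C' ih ih' =>
    intro h
    have h1 : ∀ p ∈ c, ∀ p2 ∈ c, Contract.deriv p C = Contract.deriv p2 C := by
      intro p hp p2 hp2
      have h2 := h p hp p2 hp2
      simp only [Contract.deriv] at h2
      injection h2
    have h2 : ∀ p ∈ c, ∀ p2 ∈ c, Contract.deriv p C' = Contract.deriv p2 C' := by
      intro p hp p2 hp2
      have h2 := h p hp p2 hp2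
      simp only [Contract.deriv] at h2
      injection h2
    simp only [Contract.lderiv, Contract.deriv, ih h1, ih' h2]
  | concat C C' ih ih' =>
    intro h
    by_cases hn : Contract.nullable C
    · have h1 : ∀ p ∈ c, ∀ p2 ∈ c, Contract.deriv p C = Contract.deriv p2 C := by
        intro p hp p2 hp2
        have h2 := h p hp p2 hp2
        simp only [Contract.deriv, if_pos hn] at h2
        have h3 := (Contract.union.injEq _ _ _ _).mp h2
        injection h3.1
      have h2 : ∀ p ∈ c, ∀ p2 ∈ c, Contract.deriv p C' = Contract.deriv p2 C' := by
        intro p hp p2 hp2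
        have h2 := h p hp p2 hp2
        simp only [Contract.deriv, if_pos hn] at h2
        exact ((Contract.union.injEq _ _ _ _).mp h2).2
      simp only [Contract.lderiv, Contract.deriv, if_pos hn, ih h1, ih' h2]
    · have h1 : ∀ p ∈ c, ∀ p2 ∈ c, Contract.deriv p C = Contract.deriv p2 C := by
        intro p hp p2 hp2
        have h2 := h p hp p2 hp2
        simp only [Contract.deriv, if_neg hn] at h2
        injection h2
      simp only [Contract.lderiv, Contract.deriv, if_neg hn, ih h1]

/-- For a first literal whose property derivatives all coincide, the literal
derivative captures exactly the intersection of the property derivatives. -/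
theorem lang_lderiv_eq {A : Type*} (C : Contract A) (c : Set A)
    (hc : c ∈ Contract.firstLits C) (hne : c.Nonempty)
    (hcoincide : ∀ p ∈ c, ∀ p2 ∈ c, Contract.deriv p C = Contract.deriv p2 C) :
    (Contract.lang (Contract.lderiv c C) : Set (List A)) =
      ⋂ p ∈ c, (Contract.lang (Contract.deriv p C) : Set (List A)) := by
  obtain ⟨p₀, hp₀⟩ := hne
  rw [lderiv_eq_deriv_aux c p₀ hp₀ C hcoincide]
  ext w
  simp only [Set.mem_iInter]
  constructor
  · intro hw p hp
    rw [hcoincide p hp p₀ hp₀]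
    exact hw
  · intro hw
    exact hw p₀ hp₀
end

section
/- For every property p and every path P, if P ∈ L(δ_p(C)) then there exists a literal c ∈ first(C) with p ∈ L(c) such that P ∈ L(δ_c(C)) (path preservation of the literal derivative). -/
/-- Monotonicity of the literal derivative: a smaller literal yields a larger language. -/
theorem lderiv_mono {A : Type*} {c₀ c₁ : Set A} (hsub : c₀ ⊆ c₁) (C : Contract A) :
    Contract.lang (Contract.lderiv c₁ C) ⊆ Contract.lang (Contract.lderiv c₀ C) := by
  induction C with
  | emptyset => simp [Contract.lderiv]
  | eps => simp [Contract.lderiv]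
  | lit s =>
    simp only [Contract.lderiv]
    by_cases h : c₁ ⊆ s
    · rw [if_pos h, if_pos (hsub.trans h)]
    · rw [if_neg h]; simp [Contract.lang]
  | star c ih =>
    simp only [Contract.lderiv, Contract.lang]
    rintro w ⟨u, hu, v, hv, rfl⟩
    exact ⟨u, ih hu, v, hv, rfl⟩
  | union c c' ih ih' =>
    simp only [Contract.lderiv, Contract.lang]
    exact Set.union_subset_union ih ih'
  | inter c c' ih ih' =>
    simp only [Contract.lderiv, Contract.lang]
    exact Set.inter_subset_inter ih ih'
  | concat c c' ih ih' =>
    simp only [Contract.lderiv]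
    by_cases h : Contract.nullable c
    · rw [if_pos h, if_pos h]
      simp only [Contract.lang]
      apply Set.union_subset_union _ ih'
      rintro w ⟨u, hu, v, hv, rfl⟩
      exact ⟨u, ih hu, v, hv, rfl⟩
    · rw [if_neg h, if_neg h]
      simp only [Contract.lang]
      rintro w ⟨u, hu, v, hv, rfl⟩
      exact ⟨u, ih hu, v, hv, rfl⟩

/-- Path preservation of the literal derivative. -/
theorem path_preservation {A : Type*} (C : Contract A) (p : A) (P : List A)
    (h : P ∈ Contract.lang (Contract.deriv p C)) :
    ∃ c ∈ Contract.firstLits C, p ∈ c ∧ P ∈ Contract.lang (Contract.lderiv c C) := by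
  induction C generalizing P with
  | emptyset => simp [Contract.deriv, Contract.lang] at h
  | eps => simp [Contract.deriv, Contract.lang] at h
  | lit s =>
    simp only [Contract.deriv] at h
    by_cases hp : p ∈ s
    · refine ⟨s, by simp [Contract.firstLits], hp, ?_⟩
      rw [if_pos hp] at h
      simpa [Contract.lderiv] using h
    · rw [if_neg hp] at h
      simp [Contract.lang] at h
  | star c ih =>
    simp only [Contract.deriv, Contract.lang] at h
    obtain ⟨u, hu, v, hv, rfl⟩ := h
    obtain ⟨a, ha, hpa, hua⟩ := ih u hu
    exact ⟨a, ha, hpa, ⟨u, hua, v, hv, rfl⟩⟩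
  | union c c' ih ih' =>
    simp only [Contract.deriv, Contract.lang] at h
    rcases h with h | h
    · obtain ⟨a, ha, hpa, hP⟩ := ih P h
      exact ⟨a, Or.inl ha, hpa, Or.inl hP⟩
    · obtain ⟨a, ha, hpa, hP⟩ := ih' P h
      exact ⟨a, Or.inr ha, hpa, Or.inr hP⟩
  | inter c c' ih ih' =>
    simp only [Contract.deriv, Contract.lang] at h
    obtain ⟨a, ha, hpa, hPa⟩ := ih P h.1
    obtain ⟨b, hb, hpb, hPb⟩ := ih' P h.2
    refine ⟨a ∩ b, ⟨a, ha, b, hb, rfl⟩, ⟨hpa, hpb⟩, ?_, ?_⟩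
    · exact lderiv_mono Set.inter_subset_left c hPa
    · exact lderiv_mono Set.inter_subset_right c' hPb
  | concat c c' ih ih' =>
    simp only [Contract.deriv] at h
    by_cases hn : Contract.nullable c
    · rw [if_pos hn] at h
      simp only [Contract.lang] at h
      rcases h with ⟨u, hu, v, hv, rfl⟩ | h
      · obtain ⟨a, ha, hpa, hua⟩ := ih u hu
        refine ⟨a, ?_, hpa, ?_⟩
        · simp [Contract.firstLits, hn, ha]
        · simp only [Contract.lderiv, if_pos hn, Contract.lang]
          exact Or.inl ⟨u, hua, v, hv, rfl⟩
      · obtain ⟨a, ha, hpa, hPa⟩ := ih' P h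
        refine ⟨a, ?_, hpa, ?_⟩
        · simp [Contract.firstLits, hn, ha]
        · simp only [Contract.lderiv, if_pos hn, Contract.lang]
          exact Or.inr hPa
    · rw [if_neg hn] at h
      simp only [Contract.lang] at h
      obtain ⟨u, hu, v, hv, rfl⟩ := h
      obtain ⟨a, ha, hpa, hua⟩ := ih u hu
      refine ⟨a, ?_, hpa, ?_⟩
      · simp [Contract.firstLits, hn, ha]
      · simp only [Contract.lderiv, if_neg hn, Contract.lang]
        exact ⟨u, hua, v, hv, rfl⟩
end

section
/- For contracts C and C', if (ν(C) implies ν(C')) and for every literal c ∈ first(C) the literal derivatives satisfy L(δ_c(C)) ⊆ L(δ_c(C')), then L(C) ⊆ L(C'). -/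
namespace Contract

variable {A : Type*}

lemma nullable_iff (C : Contract A) : nullable C = true ↔ [] ∈ lang C := by
  induction C with
  | emptyset => simp [nullable, lang]
  | eps => simp [nullable, lang]
  | lit s => simp [nullable, lang]
  | star c ih => simp [nullable, lang]; exact ⟨[], by simp⟩
  | union c c' ih ih' => simp [nullable, lang, ih, ih']
  | inter c c' ih ih' => simp [nullable, lang, ih, ih']
  | concat c c' ih ih' =>
      simp only [nullable, lang, Bool.and_eq_true, ih, ih', Set.mem_setOf_eq]
      constructor
      · rintro ⟨h1, h2⟩; exact ⟨[], h1, [], h2, rfl⟩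
      · rintro ⟨u, hu, v, hv, h⟩
        rcases List.append_eq_nil_iff.mp h.symm with ⟨rfl, rfl⟩
        exact ⟨hu, hv⟩

lemma flatten_head : ∀ (l : List (List A)) (p : A) (w : List A),
    l.flatten = p :: w →
    ∃ (u : List A) (rest : List (List A)), (p :: u) ∈ l ∧ (∀ x ∈ rest, x ∈ l) ∧
      w = u ++ rest.flatten := by
  intro l
  induction l with
  | nil => intro p w h; simp at h
  | cons a l ih =>
      intro p w h
      cases a with
      | nil =>
          simp only [List.flatten_cons, List.nil_append] at h
          obtain ⟨u, rest, h1, h2, h3⟩ := ih p w h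
          exact ⟨u, rest, List.mem_cons_of_mem _ h1,
            fun x hx => List.mem_cons_of_mem _ (h2 x hx), h3⟩
      | cons q a' =>
          simp only [List.flatten_cons, List.cons_append, List.cons.injEq] at h
          obtain ⟨rfl, rfl⟩ := h
          exact ⟨a', l, List.mem_cons_self,
            fun x hx => List.mem_cons_of_mem _ hx, rfl⟩

/-- p ∈ c and P ∈ L(lderiv c X) implies p :: P ∈ L(X). -/
lemma cons_mem_of_lderiv {c : Set A} {p : A} (hp : p ∈ c) :
    ∀ (X : Contract A) (P : List A), P ∈ lang (lderiv c X) → p :: P ∈ lang X := by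
  intro X
  induction X with
  | emptyset => intro P h; simp [lderiv, lang] at h
  | eps => intro P h; simp [lderiv, lang] at h
  | lit s =>
      intro P h
      simp only [lderiv] at h
      split at h
      · next hcs =>
          simp only [lang, Set.mem_singleton_iff] at h
          subst h
          exact ⟨p, hcs hp, rfl⟩
      · simp [lang] at h
  | star x ih =>
      intro P h
      simp only [lderiv, lang, Set.mem_setOf_eq] at h ⊢
      obtain ⟨u, hu, v, hv, rfl⟩ := h
      obtain ⟨l, hl, rfl⟩ := hv
      exact ⟨(p :: u) :: l, by
        intro y hy
        rcases List.mem_cons.mp hy with rfl | hy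
        · exact ih u hu
        · exact hl y hy, rfl⟩
  | union x x' ih ih' =>
      intro P h
      rcases h with h | h
      · exact Or.inl (ih P h)
      · exact Or.inr (ih' P h)
  | inter x x' ih ih' =>
      intro P h
      exact ⟨ih P h.1, ih' P h.2⟩
  | concat x x' ih ih' =>
      intro P h
      simp only [lderiv] at h
      split at h
      · next hn =>
          rcases h with h | h
          · obtain ⟨u, hu, v, hv, rfl⟩ := h
            exact ⟨p :: u, ih u hu, v, hv, rfl⟩
          · exact ⟨[], (nullable_iff x).mp hn, p :: P, ih' P h, rfl⟩
      · obtain ⟨u, hu, v, hv, rfl⟩ := h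
        exact ⟨p :: u, ih u hu, v, hv, rfl⟩

/-- Antitonicity of lderiv in the literal. -/
lemma lderiv_anti {c c' : Set A} (hcc : c ⊆ c') :
    ∀ (X : Contract A), lang (lderiv c' X) ⊆ lang (lderiv c X) := by
  intro X
  induction X with
  | emptyset => intro w h; exact h
  | eps => intro w h; exact h
  | lit s =>
      intro w h
      simp only [lderiv] at h ⊢
      split at h
      · next hs =>
          rw [if_pos (hcc.trans hs)]; exact h
      · simp [lang] at h
  | star x ih =>
      rintro w ⟨u, hu, v, hv, rfl⟩
      exact ⟨u, ih hu, v, hv, rfl⟩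
  | union x x' ih ih' =>
      rintro w (h | h)
      · exact Or.inl (ih h)
      · exact Or.inr (ih' h)
  | inter x x' ih ih' =>
      rintro w ⟨h1, h2⟩
      exact ⟨ih h1, ih' h2⟩
  | concat x x' ih ih' =>
      intro w h
      simp only [lderiv] at h ⊢
      split at h
      · next hn =>
          rw [if_pos hn]
          rcases h with ⟨u, hu, v, hv, rfl⟩ | h
          · exact Or.inl ⟨u, ih hu, v, hv, rfl⟩
          · exact Or.inr (ih' h)
      · next hn =>
          rw [if_neg hn]
          obtain ⟨u, hu, v, hv, rfl⟩ := h
          exact ⟨u, ih hu, v, hv, rfl⟩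

/-- Completeness: every nonempty word comes from some first literal. -/
lemma exists_first {p : A} :
    ∀ (X : Contract A) (P : List A), p :: P ∈ lang X →
      ∃ c ∈ firstLits X, p ∈ c ∧ P ∈ lang (lderiv c X) := by
  intro X
  induction X with
  | emptyset => intro P h; simp [lang] at h
  | eps => intro P h; simp [lang] at h
  | lit s =>
      intro P h
      obtain ⟨q, hq, hw⟩ := h
      simp only [List.cons.injEq] at hw
      obtain ⟨rfl, rfl⟩ := hw
      refine ⟨s, rfl, hq, ?_⟩
      simp only [lderiv, if_pos (subset_refl s)]
      rfl
  | star x ih =>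
      intro P h
      obtain ⟨l, hl, hfl⟩ := h
      obtain ⟨u, rest, hu, hrest, rfl⟩ := flatten_head l p P hfl.symm
      obtain ⟨c, hc, hpc, hP⟩ := ih u (hl _ hu)
      refine ⟨c, hc, hpc, ?_⟩
      exact ⟨u, hP, rest.flatten, ⟨rest, fun x hx => hl x (hrest x hx), rfl⟩, rfl⟩
  | union x x' ih ih' =>
      intro P h
      rcases h with h | h
      · obtain ⟨c, hc, hpc, hP⟩ := ih P h
        exact ⟨c, Or.inl hc, hpc, Or.inl hP⟩
      · obtain ⟨c, hc, hpc, hP⟩ := ih' P h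
        exact ⟨c, Or.inr hc, hpc, Or.inr hP⟩
  | inter x x' ih ih' =>
      intro P h
      obtain ⟨c1, hc1, hp1, hP1⟩ := ih P h.1
      obtain ⟨c2, hc2, hp2, hP2⟩ := ih' P h.2
      refine ⟨c1 ∩ c2, ⟨c1, hc1, c2, hc2, rfl⟩, ⟨hp1, hp2⟩, ?_⟩
      exact ⟨lderiv_anti Set.inter_subset_left x hP1,
        lderiv_anti Set.inter_subset_right x' hP2⟩
  | concat x x' ih ih' =>
      intro P h
      obtain ⟨u, hu, v, hv, huv⟩ := h
      cases u with
      | nil =>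
          simp only [List.nil_append] at huv
          subst huv
          have hn : nullable x = true := (nullable_iff x).mpr hu
          obtain ⟨c, hc, hpc, hP⟩ := ih' P hv
          refine ⟨c, ?_, hpc, ?_⟩
          · simp only [firstLits, if_pos hn]; exact Or.inr hc
          · simp only [lderiv, if_pos hn]; exact Or.inr hP
      | cons q u' =>
          simp only [List.cons_append, List.cons.injEq] at huv
          obtain ⟨rfl, rfl⟩ := huv
          obtain ⟨c, hc, hpc, hP⟩ := ih u' hu
          refine ⟨c, ?_, hpc, ?_⟩
          · simp only [firstLits]
            split
            · exact Or.inl hc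
            · exact hc
          · simp only [lderiv]
            split
            · exact Or.inl ⟨u', hP, v, hv, rfl⟩
            · exact ⟨u', hP, v, hv, rfl⟩

end Contract

/-- Soundness of the syntactic containment procedure via literal derivatives. -/
theorem containment_of_lderiv {A : Type*} (C C2 : Contract A)
    (hnull : Contract.nullable C = true → Contract.nullable C2 = true)
    (hderiv : ∀ c ∈ Contract.firstLits C,
      (Contract.lang (Contract.lderiv c C) : Set (List A)) ⊆
        (Contract.lang (Contract.lderiv c C2) : Set (List A))) :
    (Contract.lang C : Set (List A)) ⊆ (Contract.lang C2 : Set (List A)) := by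
  intro w hw
  cases w with
  | nil =>
      exact (Contract.nullable_iff C2).mp (hnull ((Contract.nullable_iff C).mpr hw))
  | cons p P =>
      obtain ⟨c, hc, hpc, hP⟩ := Contract.exists_first C P hw
      exact Contract.cons_mem_of_lderiv hpc C2 P (hderiv c hc hP)
end
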